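/- Fix α ∈ ℂ with α ≠ 0 and let B_α be ℂ³ with basis x, y, z and bilinear multiplication whose only nonzero products of basis elements are z·y = y and z·x = αx (this makes B_α a Leibniz algebra). If α ≠ 1, then every t = c₁x + c₂y + c₃z with c₁ ≠ 0, c₂ ≠ 0, c₃ ≠ 0 satisfies that {t, t², t³} is linearly independent, so B_α is cyclic; if α = 1, then B_α is not cyclic (no t ∈ B_α has {t, t², t³} linearly independent). -/

import Mathlib

/-- `lpow μ x k` is the left-normed power `x^(k+1)`; so `lpow μ x 0 = x`,
`lpow μ x 1 = x·x = x²`, `lpow μ x 2 = x·x² = x³`, etc. -/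
def lpow {A : Type*} [AddCommGroup A] [Module ℂ A]
    (μ : A →ₗ[ℂ] A →ₗ[ℂ] A) (x : A) : ℕ → A
  | 0 => x
  | n + 1 => μ x (lpow μ x n)
/-- The algebra B_α = ℂ³ with basis x = e₀, y = e₁, z = e₂ whose only nonzero products
of basis elements are z·y = y and z·x = αx; thus u·v = u₂ • L_z(v) with
L_z(x) = αx, L_z(y) = y, L_z(z) = 0. -/
noncomputable def mulB (α : ℂ) : (Fin 3 → ℂ) →ₗ[ℂ] (Fin 3 → ℂ) →ₗ[ℂ] (Fin 3 → ℂ) :=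
  (LinearMap.proj 2).smulRight (Matrix.mulVecLin !![α,0,0;0,1,0;0,0,0])

noncomputable def xB : Fin 3 → ℂ := ![1,0,0]
noncomputable def yB : Fin 3 → ℂ := ![0,1,0]
noncomputable def zB : Fin 3 → ℂ := ![0,0,1]

lemma mulB_apply (α : ℂ) (u v : Fin 3 → ℂ) :
    mulB α u v = u 2 • ![α * v 0, v 1, 0] := by
  funext i
  fin_cases i <;>
    simp [mulB, Matrix.mulVec, dotProduct, Fin.sum_univ_three,
      Matrix.vecHead, Matrix.vecTail, mul_comm]

lemma lpow_zero {A : Type*} [AddCommGroup A] [Module ℂ A]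
    (μ : A →ₗ[ℂ] A →ₗ[ℂ] A) (x : A) : lpow μ x 0 = x := rfl

lemma comb_eq (c₁ c₂ c₃ : ℂ) : c₁ • xB + c₂ • yB + c₃ • zB = ![c₁, c₂, c₃] := by
  funext i
  fin_cases i <;> simp [xB, yB, zB]

lemma lpow_one (α c₁ c₂ c₃ : ℂ) :
    lpow (mulB α) ![c₁, c₂, c₃] 1 = ![α * c₁ * c₃, c₂ * c₃, 0] := by
  show mulB α _ _ = _
  rw [lpow_zero, mulB_apply]
  funext i
  fin_cases i <;> simp <;> ring

lemma lpow_two (α c₁ c₂ c₃ : ℂ) :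
    lpow (mulB α) ![c₁, c₂, c₃] 2 = ![α * α * c₁ * (c₃ * c₃), c₂ * (c₃ * c₃), 0] := by
  show mulB α _ _ = _
  rw [lpow_one, mulB_apply]
  funext i
  fin_cases i <;> simp <;> ring

lemma li_aux (α c₁ c₂ c₃ : ℂ) (hα : α ≠ 0) (hα1 : α ≠ 1)
    (h1 : c₁ ≠ 0) (h2 : c₂ ≠ 0) (h3 : c₃ ≠ 0) :
    LinearIndependent ℂ
      ![![c₁, c₂, c₃], ![α * c₁ * c₃, c₂ * c₃, 0],
        ![α * α * c₁ * (c₃ * c₃), c₂ * (c₃ * c₃), 0]] := by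
  have : LinearIndependent ℂ (fun i =>
      (Matrix.of ![![c₁, c₂, c₃], ![α * c₁ * c₃, c₂ * c₃, 0],
        ![α * α * c₁ * (c₃ * c₃), c₂ * (c₃ * c₃), 0]]) i) := by
    refine Matrix.linearIndependent_rows_iff_isUnit.mpr ?_
    rw [Matrix.isUnit_iff_isUnit_det,
      isUnit_iff_ne_zero]
    rw [Matrix.det_fin_three]
    simp only [Matrix.of_apply, Matrix.cons_val', Matrix.cons_val_zero, Matrix.cons_val_one,
      Matrix.head_cons, Matrix.cons_val_two, Matrix.tail_cons, Matrix.empty_val',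
      Matrix.cons_val_fin_one, Matrix.head_fin_const]
    have key : α * c₁ * c₂ * (c₃ * c₃ * c₃ * c₃) * (1 - α) ≠ 0 :=
      mul_ne_zero (mul_ne_zero (mul_ne_zero (mul_ne_zero hα h1) h2)
        (by simp [h3])) (sub_ne_zero.mpr (Ne.symm hα1))
    intro hE
    exact key (by linear_combination hE)
  exact this

/-- For α ≠ 0: if α ≠ 1, every t = c₁x + c₂y + c₃z with
c₁, c₂, c₃ ≠ 0 has {t, t², t³} linearly independent, so B_α is cyclic;
if α = 1, B_α is not cyclic. -/
theorem algebraB_cyclic_iff (α : ℂ) (hα : α ≠ 0) :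
    (α ≠ 1 →
      (∀ c₁ c₂ c₃ : ℂ, c₁ ≠ 0 → c₂ ≠ 0 → c₃ ≠ 0 →
        LinearIndependent ℂ
          ![c₁ • xB + c₂ • yB + c₃ • zB,
            lpow (mulB α) (c₁ • xB + c₂ • yB + c₃ • zB) 1,
            lpow (mulB α) (c₁ • xB + c₂ • yB + c₃ • zB) 2]) ∧
      (∃ t : Fin 3 → ℂ, ∃ e : Module.Basis (Fin 3) ℂ (Fin 3 → ℂ),
          ∀ i : Fin 3, e i = lpow (mulB α) t (i : ℕ))) ∧
    (α = 1 →
      ¬ ∃ t : Fin 3 → ℂ,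
          LinearIndependent ℂ ![t, lpow (mulB α) t 1, lpow (mulB α) t 2]) := by
  constructor
  · intro hα1
    constructor
    · intro c₁ c₂ c₃ h1 h2 h3
      rw [comb_eq, lpow_one, lpow_two]
      exact li_aux α c₁ c₂ c₃ hα hα1 h1 h2 h3
    · refine ⟨![1, 1, 1], ?_⟩
      have hli : LinearIndependent ℂ
          ![(![1, 1, 1] : Fin 3 → ℂ), lpow (mulB α) ![1, 1, 1] 1,
            lpow (mulB α) ![1, 1, 1] 2] := by
        rw [lpow_one, lpow_two]
        exact li_aux α 1 1 1 hα hα1 one_ne_zero one_ne_zero one_ne_zero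
      have hcard : Fintype.card (Fin 3) = Module.finrank ℂ (Fin 3 → ℂ) := by
        rw [Module.finrank_fin_fun, Fintype.card_fin]
      refine ⟨basisOfLinearIndependentOfCardEqFinrank hli hcard, fun i => ?_⟩
      rw [coe_basisOfLinearIndependentOfCardEqFinrank]
      fin_cases i <;> rfl
  · rintro rfl ⟨t, hli⟩
    have h2 : lpow (mulB 1) t 2 = t 2 • lpow (mulB 1) t 1 := by
      show mulB 1 t (mulB 1 t t) = t 2 • mulB 1 t t
      rw [mulB_apply, mulB_apply]
      funext i
      fin_cases i <;> simp
    have hg := Fintype.linearIndependent_iff.mp hli ![0, -(t 2), 1] ?_ 2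
    · simp at hg
    · rw [Fin.sum_univ_three]
      simp [h2]
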